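/- arXiv:2205.14482 — 2 statements merged into one kernel-verified Lean document; each statement's English description precedes it below -/
import Mathlib

section
/- Let N ≥ 6 and set B₁ = (2/(2π)^{N−2}) ∑_{i=1}^∞ i^{−(N−2)}. With x̄_j as the vertices of a regular k-gon setup (|x̄_1 − x̄_j| = 2r√(1−h²) sin((j−1)π/k)), one has ∑_{j=2}^k |x̄_1 − x̄_j|^{−(N−2)} = (k/(r√(1−h²)))^{N−2} (B₁ + O(1/k²)) as k → ∞, uniformly for 0 ≤ h ≤ 1/2; i.e., there exists C > 0 independent of k, r, h such that | ∑_{j=2}^k (2r√(1−h²) sin((j−1)π/k))^{−(N−2)} − B₁ (k/(r√(1−h²)))^{N−2} | ≤ C (k/(r√(1−h²)))^{N−2} / k². -/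
open Real Finset

lemma aux_pow_bound (n : ℕ) {u : ℝ} (hu : 0 ≤ u) (hu1 : u ≤ 1) :
    (1 + u) ^ n ≤ 1 + (2 ^ n - 1) * u := by
  induction n with
  | zero => simp
  | succ n ih =>
    have h2 : (1:ℝ) ≤ 2 ^ n := one_le_pow₀ (by norm_num)
    have hx : (0:ℝ) ≤ 1 + u := by linarith
    calc (1+u)^(n+1) = (1+u)^n * (1+u) := by ring
      _ ≤ (1 + (2^n - 1)*u) * (1+u) := by
          apply mul_le_mul_of_nonneg_right ih hx
      _ ≤ 1 + (2 ^ (n+1) - 1) * u := by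
          rw [pow_succ]
          nlinarith [mul_nonneg (mul_nonneg (by linarith : (0:ℝ) ≤ 2^n - 1) hu)
            (by linarith : (0:ℝ) ≤ 1 - u)]

lemma aux_sum_inv_sq (m : ℕ) : ∑ i ∈ Finset.range m, (((i:ℝ)+1)^2)⁻¹ ≤ 2 := by
  have key : ∀ m : ℕ, ∑ i ∈ Finset.range m, (((i:ℝ)+1)^2)⁻¹ ≤ 2 - 2*((m:ℝ)+1)⁻¹ := by
    intro m
    induction m with
    | zero => norm_num
    | succ m ih =>
      rw [Finset.sum_range_succ]
      have h1 : (0:ℝ) < (m:ℝ) + 1 := by positivity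
      have h2 : (0:ℝ) < (m:ℝ) + 2 := by positivity
      have key2 : (((m:ℝ)+1)^2)⁻¹ ≤ 2*((m:ℝ)+1)⁻¹ - 2*((m:ℝ)+2)⁻¹ := by
        rw [show 2*((m:ℝ)+1)⁻¹ - 2*((m:ℝ)+2)⁻¹ = 2/(((m:ℝ)+1)*((m:ℝ)+2)) by
          field_simp; ring]
        rw [inv_eq_one_div, div_le_div_iff₀ (by positivity) (by positivity)]
        nlinarith
      have e2 : ((m:ℝ)+1+1)⁻¹ = ((m:ℝ)+2)⁻¹ := by rw [show (m:ℝ)+1+1 = (m:ℝ)+2 by ring]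
      push_cast
      rw [e2]
      linarith
  calc ∑ i ∈ Finset.range m, (((i:ℝ)+1)^2)⁻¹ ≤ 2 - 2*((m:ℝ)+1)⁻¹ := key m
    _ ≤ 2 := by
      have : (0:ℝ) < (m:ℝ)+1 := by positivity
      have : (0:ℝ) ≤ ((m:ℝ)+1)⁻¹ := by positivity
      linarith

lemma aux_summable (n : ℕ) (hn : 2 ≤ n) : Summable (fun i : ℕ => (((i:ℝ)+1)^n)⁻¹) := by
  have h0 : Summable (fun i : ℕ => ((i:ℝ)^n)⁻¹) :=
    (Real.summable_nat_pow_inv (p := n)).mpr (by omega)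
  have h1 := (summable_nat_add_iff (f := fun i : ℕ => ((i:ℝ)^n)⁻¹) 1).mpr h0
  refine h1.congr fun i => ?_
  push_cast
  ring_nf

lemma aux_tsum_inv_sq : ∑' i : ℕ, (((i:ℝ)+1)^2)⁻¹ ≤ 2 :=
  Real.tsum_le_of_sum_range_le (fun i => by positivity) aux_sum_inv_sq

-- monotone: g := (2 sin θ)^n ≥ ... gives lower bound
lemma aux_term_lb (n : ℕ) {θ : ℝ} (h0 : 0 < θ) (h2 : θ ≤ π/2) :
    ((2*θ)^n)⁻¹ ≤ ((2*Real.sin θ)^n)⁻¹ := by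
  have hsin : 0 < Real.sin θ := Real.sin_pos_of_pos_of_lt_pi h0
    (lt_of_le_of_lt h2 (by linarith [Real.pi_pos]))
  have hle : Real.sin θ ≤ θ := Real.sin_le h0.le
  have : (2*Real.sin θ)^n ≤ (2*θ)^n :=
    pow_le_pow_left₀ (by linarith) (by linarith) n
  exact inv_anti₀ (by positivity) this

lemma aux_term_ub (n : ℕ) (hn : 4 ≤ n) {θ : ℝ} (h0 : 0 < θ) (h2 : θ ≤ π/2) :
    ((2*Real.sin θ)^n)⁻¹ ≤ ((2*θ)^n)⁻¹ + θ^2 * ((θ:ℝ)^n)⁻¹ + 1 := by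
  have hsin : 0 < Real.sin θ := Real.sin_pos_of_pos_of_lt_pi h0
    (lt_of_le_of_lt h2 (by linarith [Real.pi_pos]))
  rcases le_or_gt θ 1 with h1 | h1
  · -- small θ : sin θ ≥ θ(1 - θ²/4)
    have hcube : θ - θ^3/4 < Real.sin θ := by
      have := Real.sin_gt_sub_cube h0
      linarith [pow_pos h0 3]
    have hq : θ * (1 - θ^2/4) ≤ Real.sin θ := by nlinarith
    have hfac : (0:ℝ) < 1 - θ^2/4 := by nlinarith
    -- (sin θ)⁻¹ ≤ θ⁻¹ * (1-θ²/4)⁻¹ ≤ θ⁻¹ (1 + θ²/2)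
    have hinv : (1 - θ^2/4)⁻¹ ≤ 1 + θ^2/2 := by
      rw [inv_le_iff_one_le_mul₀ hfac]
      have hθ2 : θ^2 ≤ 1 := by nlinarith
      nlinarith [hθ2, sq_nonneg θ]
    have hs1 : (Real.sin θ)⁻¹ ≤ θ⁻¹ * (1 + θ^2/2) := by
      have := inv_anti₀ (by positivity) hq
      calc (Real.sin θ)⁻¹ ≤ (θ * (1 - θ^2/4))⁻¹ := this
        _ = θ⁻¹ * (1 - θ^2/4)⁻¹ := by rw [mul_inv]
        _ ≤ θ⁻¹ * (1 + θ^2/2) := by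
            apply mul_le_mul_of_nonneg_left hinv (by positivity)
    have hpow : ((Real.sin θ)⁻¹)^n ≤ (θ⁻¹)^n * (1 + θ^2/2)^n := by
      calc ((Real.sin θ)⁻¹)^n ≤ (θ⁻¹ * (1 + θ^2/2))^n :=
            pow_le_pow_left₀ (by positivity) hs1 n
        _ = (θ⁻¹)^n * (1 + θ^2/2)^n := mul_pow _ _ _
    have hbd : (1 + θ^2/2)^n ≤ 1 + 2^n * θ^2 := by
      have := aux_pow_bound n (u := θ^2/2) (by positivity) (by nlinarith)
      have h2n : (0:ℝ) < 2^n := by positivity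
      nlinarith
    have e1 : ((2*Real.sin θ)^n)⁻¹ = ((Real.sin θ)⁻¹)^n * ((2:ℝ)^n)⁻¹ := by
      rw [mul_pow, mul_inv, inv_pow]; ring
    have e2 : ((2*θ)^n)⁻¹ = (θ⁻¹)^n * ((2:ℝ)^n)⁻¹ := by
      rw [mul_pow, mul_inv, inv_pow]; ring
    have h2n : (0:ℝ) < ((2:ℝ)^n)⁻¹ := by positivity
    have htn : (0:ℝ) < (θ⁻¹)^n := by positivity
    calc ((2*Real.sin θ)^n)⁻¹ = ((Real.sin θ)⁻¹)^n * ((2:ℝ)^n)⁻¹ := e1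
      _ ≤ ((θ⁻¹)^n * (1 + 2^n*θ^2)) * ((2:ℝ)^n)⁻¹ := by
          apply mul_le_mul_of_nonneg_right _ h2n.le
          calc ((Real.sin θ)⁻¹)^n ≤ (θ⁻¹)^n * (1 + θ^2/2)^n := hpow
            _ ≤ (θ⁻¹)^n * (1 + 2^n*θ^2) := mul_le_mul_of_nonneg_left hbd htn.le
      _ = ((2*θ)^n)⁻¹ + θ^2 * ((θ:ℝ)^n)⁻¹ * (2^n * ((2:ℝ)^n)⁻¹) := by
          rw [e2, inv_pow]; ring
      _ = ((2*θ)^n)⁻¹ + θ^2 * ((θ:ℝ)^n)⁻¹ := by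
          rw [mul_inv_cancel₀ (by positivity : ((2:ℝ)^n) ≠ 0)]; ring
      _ ≤ ((2*θ)^n)⁻¹ + θ^2 * ((θ:ℝ)^n)⁻¹ + 1 := by linarith
  · -- θ > 1 : sin θ ≥ 2/π > 1/2
    have hj : 2/π * θ ≤ Real.sin θ := Real.mul_le_sin h0.le h2
    have hpi : π < 3.15 := Real.pi_lt_d2
    have hpi0 : 0 < π := Real.pi_pos
    have hhalf : (1:ℝ)/2 ≤ Real.sin θ := by
      have : 2/π ≤ 2/π * θ := by
        nlinarith [div_pos (by norm_num : (0:ℝ) < 2) hpi0]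
      have h2pi : (1:ℝ)/2 ≤ 2/π := by
        rw [div_le_div_iff₀ (by norm_num) hpi0]
        linarith
      linarith
    have h2s : (1:ℝ) ≤ 2*Real.sin θ := by linarith
    have : (1:ℝ) ≤ (2*Real.sin θ)^n := one_le_pow₀ h2s
    have hpos : (0:ℝ) < (2*Real.sin θ)^n := by positivity
    have hxinv : ((2*Real.sin θ)^n)⁻¹ ≤ 1 := inv_le_one_of_one_le₀ this
    have t1 : (0:ℝ) ≤ ((2*θ)^n)⁻¹ := by positivity
    have t2 : (0:ℝ) ≤ θ^2 * ((θ:ℝ)^n)⁻¹ := by positivity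
    linarith


lemma aux_perterm (m : ℕ) (hm : 2 ≤ m) (kr x : ℝ) (hk1 : 2 ≤ kr) (hx1 : 1 ≤ x)
    (hhalf : 2*x ≤ kr) :
    0 ≤ ((2*Real.sin (x*π/kr))^(m+2))⁻¹ - kr^(m+2)/(2*π)^(m+2) * (x^(m+2))⁻¹ ∧
    ((2*Real.sin (x*π/kr))^(m+2))⁻¹ - kr^(m+2)/(2*π)^(m+2) * (x^(m+2))⁻¹
      ≤ kr^m * (x^2)⁻¹ + 1 := by
  have hpi : (0:ℝ) < π := Real.pi_pos
  have hpi1 : (1:ℝ) ≤ π := by linarith [Real.pi_gt_three]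
  have hx0 : (0:ℝ) < x := by linarith
  have hk0 : (0:ℝ) < kr := by linarith
  set θ : ℝ := x*π/kr with hθ
  have hθ0 : 0 < θ := by positivity
  have hθ2 : θ ≤ π/2 := by
    rw [hθ, div_le_div_iff₀ hk0 (by norm_num : (0:ℝ) < 2)]
    nlinarith
  have hge : kr^(m+2)/(2*π)^(m+2) * (x^(m+2))⁻¹ = ((2*θ)^(m+2))⁻¹ := by
    have h2θ : 2*θ = 2*π*x/kr := by rw [hθ]; ring
    rw [h2θ, div_pow, mul_pow, mul_pow]
    field_simp
    ring
  have hlb := aux_term_lb (m+2) hθ0 hθ2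
  have hub := aux_term_ub (m+2) (by omega) hθ0 hθ2
  have hmain : θ^2 * (θ^(m+2))⁻¹ ≤ kr^m * (x^2)⁻¹ := by
    have hsplit2 : θ^2 * (θ^(m+2))⁻¹ = (θ^m)⁻¹ := by
      rw [pow_add, mul_inv]
      field_simp
    rw [hsplit2]
    have he : kr * θ = x*π := by rw [hθ]; field_simp
    have hxx : x^2 ≤ kr^m * θ^m := by
      rw [← mul_pow, he]
      calc x^2 ≤ x^m := pow_le_pow_right₀ hx1 hm
        _ ≤ (x*π)^m := by
            apply pow_le_pow_left₀ hx0.le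
            nlinarith
    have : (θ^m)⁻¹ ≤ kr^m/x^2 := by
      rw [inv_eq_one_div, div_le_div_iff₀ (by positivity) (by positivity)]
      linarith
    rw [div_eq_mul_inv] at this
    exact this
  constructor
  · rw [hge]; linarith
  · rw [hge]; linarith

lemma core (m K' k : ℕ) (hm : 2 ≤ m) (hk : k = 2*K'+2) :
    |(∑ i ∈ Finset.range (k-1), ((2*Real.sin (((i:ℝ)+1)*π/(k:ℝ)))^(m+2))⁻¹) -
      2/(2*π)^(m+2) * (∑' i : ℕ, (((i:ℝ)+1)^(m+2))⁻¹) * (k:ℝ)^(m+2)|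
      ≤ 23 * (k:ℝ)^m := by
  have hpi : (0:ℝ) < π := Real.pi_pos
  have hpi1 : (1:ℝ) ≤ π := by linarith [Real.pi_gt_three]
  have hk2 : 2 ≤ k := by omega
  have hk0 : (0:ℝ) < (k:ℝ) := by exact_mod_cast (by omega : 0 < k)
  have hk1 : (2:ℝ) ≤ (k:ℝ) := by exact_mod_cast hk2
  set F : ℕ → ℝ := fun i => ((2*Real.sin (((i:ℝ))*π/(k:ℝ)))^(m+2))⁻¹ with hF
  set Fz : ℕ → ℝ := fun i => (((i:ℝ)+1)^(m+2))⁻¹ with hFz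
  set c : ℝ := (k:ℝ)^(m+2)/(2*π)^(m+2) with hc
  -- rewrite statement sum
  have hsum_eq : (∑ i ∈ Finset.range (k-1),
      ((2*Real.sin (((i:ℝ)+1)*π/(k:ℝ)))^(m+2))⁻¹) = ∑ i ∈ Finset.range (k-1), F (i+1) := by
    refine Finset.sum_congr rfl fun i _ => ?_
    simp only [hF]
    norm_num
  -- Step A : symmetry
  have stepA : ∑ i ∈ Finset.range (k-1), F (i+1)
      = 2 * (∑ i ∈ Finset.range K', F (i+1)) + F (K'+1) := by
    have h1 : k - 1 = (K'+1) + K' := by omega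
    rw [h1, Finset.sum_range_add, Finset.sum_range_succ]
    have h2 : ∑ i ∈ Finset.range K', F ((K'+1) + i + 1) = ∑ i ∈ Finset.range K', F (i+1) := by
      rw [← Finset.sum_range_reflect (fun j => F (j+1)) K']
      refine Finset.sum_congr rfl fun i hi => ?_
      have hiK : i < K' := Finset.mem_range.mp hi
      have e1 : K'+1+i+1 = K'+2+i := by omega
      have e2 : K'-1-i+1 = K'-i := by omega
      rw [e1, e2]
      simp only [hF]
      have hcast : ((K' - i : ℕ):ℝ) = (K':ℝ) - (i:ℝ) := by
        rw [Nat.cast_sub hiK.le]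
      have harg : ((K'+2+i:ℕ):ℝ)*π/(k:ℝ) = π - ((K'-i:ℕ):ℝ)*π/(k:ℝ) := by
        rw [hcast, hk]
        push_cast
        field_simp
        ring
      push_cast at harg ⊢
      rw [harg, Real.sin_pi_sub]
    rw [h2]
    ring
  -- Step B : tsum split
  have hsm : Summable Fz := aux_summable (m+2) (by omega)
  have hsplit : ∑' i, Fz i = ∑ i ∈ Finset.range K', Fz i + ∑' i, Fz (i + K') :=
    (Summable.sum_add_tsum_nat_add K' hsm).symm
  set T : ℝ := ∑' i, Fz (i + K') with hT
  -- Step C : per-term bounds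
  have stepC : ∀ i ∈ Finset.range K',
      0 ≤ F (i+1) - c * Fz i ∧
      F (i+1) - c * Fz i ≤ (k:ℝ)^m * (((i:ℝ)+1)^2)⁻¹ + 1 := by
    intro i hi
    have hiK : i < K' := Finset.mem_range.mp hi
    have hx1 : (1:ℝ) ≤ (i:ℝ)+1 := by
      have : (0:ℝ) ≤ (i:ℝ) := Nat.cast_nonneg i
      linarith
    have hxh : 2*((i:ℝ)+1) ≤ (k:ℝ) := by
      have h1 : (i:ℝ)+1 ≤ (K':ℝ) := by exact_mod_cast hiK
      have h2 : (k:ℝ) = 2*(K':ℝ)+2 := by rw [hk]; push_cast; ring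
      linarith
    have h := aux_perterm m hm (k:ℝ) ((i:ℝ)+1) hk1 hx1 hxh
    have hFeq : F (i+1) = ((2*Real.sin (((i:ℝ)+1)*π/(k:ℝ)))^(m+2))⁻¹ := by
      simp only [hF]
      norm_num
    have hFzeq : c * Fz i = (k:ℝ)^(m+2)/(2*π)^(m+2) * ((((i:ℝ)+1))^(m+2))⁻¹ := rfl
    rw [hFeq, hFzeq]
    exact h
  -- Step D : sum of the per-term bounds
  have stepD1 : 0 ≤ ∑ i ∈ Finset.range K', (F (i+1) - c * Fz i) :=
    Finset.sum_nonneg fun i hi => (stepC i hi).1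
  have stepD2 : ∑ i ∈ Finset.range K', (F (i+1) - c * Fz i) ≤ 3 * (k:ℝ)^m := by
    have h1 : ∑ i ∈ Finset.range K', (F (i+1) - c * Fz i)
        ≤ ∑ i ∈ Finset.range K', ((k:ℝ)^m * (((i:ℝ)+1)^2)⁻¹ + 1) :=
      Finset.sum_le_sum fun i hi => (stepC i hi).2
    have h2 : ∑ i ∈ Finset.range K', ((k:ℝ)^m * (((i:ℝ)+1)^2)⁻¹ + 1)
        = (k:ℝ)^m * (∑ i ∈ Finset.range K', (((i:ℝ)+1)^2)⁻¹) + K' := by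
      rw [Finset.sum_add_distrib, ← Finset.mul_sum]
      simp
    have h3 : (k:ℝ)^m * (∑ i ∈ Finset.range K', (((i:ℝ)+1)^2)⁻¹) ≤ (k:ℝ)^m * 2 := by
      apply mul_le_mul_of_nonneg_left (aux_sum_inv_sq K') (by positivity)
    have h4 : (K':ℝ) ≤ (k:ℝ)^m := by
      have ha : (K':ℝ) ≤ (k:ℝ) := by
        have : (K':ℕ) ≤ k := by omega
        exact_mod_cast this
      have hb : (k:ℝ) = (k:ℝ)^1 := (pow_one _).symm
      have hcc : (k:ℝ)^1 ≤ (k:ℝ)^m := pow_le_pow_right₀ (by linarith) (by omega)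
      linarith [hb ▸ hcc]
    linarith
  -- Step E : middle term
  have hFval : F (K'+1) = ((2:ℝ)^(m+2))⁻¹ := by
    have harg : (((K'+1:ℕ)):ℝ)*π/(k:ℝ) = π/2 := by
      rw [hk]
      push_cast
      field_simp
    simp only [hF]
    push_cast at harg ⊢
    rw [harg, Real.sin_pi_div_two, mul_one]
  have stepE0 : 0 ≤ F (K'+1) := by rw [hFval]; positivity
  have stepE : F (K'+1) ≤ (k:ℝ)^m := by
    rw [hFval]
    have h1 : ((2:ℝ)^(m+2))⁻¹ ≤ 1 := inv_le_one_of_one_le₀ (one_le_pow₀ (by norm_num))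
    have h2 : (1:ℝ) ≤ (k:ℝ)^m := one_le_pow₀ (by linarith)
    linarith
  -- Step F : tail bound
  have hkK : (k:ℝ) = 2*((K':ℝ)+1) := by rw [hk]; push_cast; ring
  have hTnn : 0 ≤ T := tsum_nonneg fun i => by simp only [hFz]; positivity
  have hTle : T ≤ 2 * (((K':ℝ)+1)^2)⁻¹ := by
    have hs1 : Summable (fun i => Fz (i+K')) := (summable_nat_add_iff K').mpr hsm
    have hs2 : Summable (fun i : ℕ => (((K':ℝ)+1)^2)⁻¹ * (((i:ℝ)+1)^2)⁻¹) :=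
      (aux_summable 2 le_rfl).mul_left _
    have hle : ∀ i : ℕ, Fz (i+K') ≤ (((K':ℝ)+1)^2)⁻¹ * (((i:ℝ)+1)^2)⁻¹ := by
      intro i
      simp only [hFz]
      push_cast
      have h1 : (1:ℝ) ≤ (i:ℝ)+(K':ℝ)+1 := by
        have := Nat.cast_nonneg (α := ℝ) i
        have := Nat.cast_nonneg (α := ℝ) K'
        linarith
      have h2 : (((i:ℝ)+1)*((K':ℝ)+1))^2 ≤ ((i:ℝ)+(K':ℝ)+1)^(m+2) := by
        calc (((i:ℝ)+1)*((K':ℝ)+1))^2 ≤ (((i:ℝ)+(K':ℝ)+1)^2)^2 := by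
              apply pow_le_pow_left₀ (by positivity)
              nlinarith [Nat.cast_nonneg (α := ℝ) i, Nat.cast_nonneg (α := ℝ) K']
          _ = ((i:ℝ)+(K':ℝ)+1)^4 := by ring
          _ ≤ ((i:ℝ)+(K':ℝ)+1)^(m+2) := pow_le_pow_right₀ h1 (by omega)
      have h3 : ((((i:ℝ)+(K':ℝ)+1))^(m+2))⁻¹ ≤ ((((i:ℝ)+1)*((K':ℝ)+1))^2)⁻¹ := by
        apply inv_anti₀ (by positivity) h2
      refine le_trans h3 (le_of_eq ?_)
      rw [mul_pow, mul_inv]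
      ring
    calc T ≤ ∑' i : ℕ, (((K':ℝ)+1)^2)⁻¹ * (((i:ℝ)+1)^2)⁻¹ := Summable.tsum_le_tsum hle hs1 hs2
      _ = (((K':ℝ)+1)^2)⁻¹ * ∑' i : ℕ, (((i:ℝ)+1)^2)⁻¹ := tsum_mul_left
      _ ≤ (((K':ℝ)+1)^2)⁻¹ * 2 :=
          mul_le_mul_of_nonneg_left aux_tsum_inv_sq (by positivity)
      _ = 2 * (((K':ℝ)+1)^2)⁻¹ := by ring
  have hc0 : (0:ℝ) ≤ c := by rw [hc]; positivity
  have hcle : c ≤ (k:ℝ)^(m+2) := by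
    rw [hc]
    apply div_le_self (by positivity)
    exact one_le_pow₀ (by linarith : (1:ℝ) ≤ 2*π)
  have hKp : (0:ℝ) < ((K':ℝ)+1)^2 := by positivity
  have h2cT : 2*c*T ≤ 16*(k:ℝ)^m := by
    have h5 : c*T ≤ (k:ℝ)^(m+2)*(2*(((K':ℝ)+1)^2)⁻¹) :=
      mul_le_mul hcle hTle hTnn (by positivity)
    have hk2e : (k:ℝ)^2 = 4*((K':ℝ)+1)^2 := by rw [hkK]; ring
    have heq : 2*((k:ℝ)^(m+2)*(2*(((K':ℝ)+1)^2)⁻¹)) = 16*(k:ℝ)^m := by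
      calc 2*((k:ℝ)^(m+2)*(2*(((K':ℝ)+1)^2)⁻¹))
          = 4*((k:ℝ)^m*(k:ℝ)^2)*(((K':ℝ)+1)^2)⁻¹ := by rw [pow_add]; ring
        _ = 16*(k:ℝ)^m*(((K':ℝ)+1)^2*(((K':ℝ)+1)^2)⁻¹) := by rw [hk2e]; ring
        _ = 16*(k:ℝ)^m := by rw [mul_inv_cancel₀ (ne_of_gt hKp), mul_one]
    linarith
  have h2cT0 : 0 ≤ 2*c*T := mul_nonneg (by linarith) hTnn
  -- Step G : assembly
  rw [hsum_eq, stepA]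
  have hBz : 2/(2*π)^(m+2) * (∑' i, Fz i) * (k:ℝ)^(m+2) = 2*c*(∑' i, Fz i) := by
    rw [hc]; ring
  rw [hBz, hsplit]
  have hdist : ∑ i ∈ Finset.range K', (F (i+1) - c * Fz i)
      = (∑ i ∈ Finset.range K', F (i+1)) - c * ∑ i ∈ Finset.range K', Fz i := by
    rw [Finset.sum_sub_distrib, Finset.mul_sum]
  have hkey : 2 * (∑ i ∈ Finset.range K', F (i+1)) + F (K'+1)
        - 2*c*((∑ i ∈ Finset.range K', Fz i) + T)
      = 2*(∑ i ∈ Finset.range K', (F (i+1) - c * Fz i)) + F (K'+1) - 2*c*T := by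
    rw [hdist]; ring
  rw [hkey]
  rw [abs_le]
  constructor
  · linarith
  · linarith

theorem stmt_5 (N : ℕ) (hN : 6 ≤ N) :
    ∃ C > 0, ∀ k : ℕ, 2 ≤ k → Even k → ∀ r h : ℝ, 0 < r → 0 ≤ h → h ≤ 1 / 2 →
      |(∑ j ∈ Finset.Icc 2 k,
            (2 * r * Real.sqrt (1 - h ^ 2) * Real.sin (((j : ℝ) - 1) * π / k)) ^
              (-(N - 2 : ℝ))) -
          (2 / (2 * π) ^ (N - 2 : ℝ) * ∑' i : ℕ, ((i : ℝ) + 1) ^ (-(N - 2 : ℝ))) *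
            ((k : ℝ) / (r * Real.sqrt (1 - h ^ 2))) ^ (N - 2 : ℝ)| ≤
        C * ((k : ℝ) / (r * Real.sqrt (1 - h ^ 2))) ^ (N - 2 : ℝ) / (k : ℝ) ^ 2 := by
  refine ⟨23, by norm_num, ?_⟩
  intro k hk2 hkeven r h hr hh0 hh12
  obtain ⟨K, hK⟩ := hkeven
  set m : ℕ := N - 4 with hm'
  have hm : 2 ≤ m := by omega
  have hkk : k = 2*(K-1)+2 := by omega
  have h1h : (0:ℝ) < 1 - h^2 := by nlinarith
  set s : ℝ := Real.sqrt (1-h^2) with hs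
  have hs0 : 0 < s := Real.sqrt_pos.mpr h1h
  have ha0 : 0 < r*s := mul_pos hr hs0
  have hkpos : (0:ℝ) < (k:ℝ) := by exact_mod_cast (by omega : 0 < k)
  have hexp : ((N:ℝ) - 2) = ((m+2 : ℕ):ℝ) := by
    have heq : (m+2:ℕ) = N - 2 := by omega
    rw [heq, Nat.cast_sub (by omega : 2 ≤ N)]
    norm_num
  rw [hexp]
  have hrpow : ∀ x : ℝ, 0 < x → x ^ (-((m+2:ℕ):ℝ)) = (x^(m+2))⁻¹ := fun x hx => by
    rw [Real.rpow_neg hx.le, Real.rpow_natCast]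
  have hrpow' : ∀ x : ℝ, x ^ (((m+2:ℕ)):ℝ) = x^(m+2) := fun x => Real.rpow_natCast x (m+2)
  have hsum : (∑ j ∈ Finset.Icc 2 k,
        (2*r*s*Real.sin (((j:ℝ)-1)*π/(k:ℝ))) ^ (-((m+2:ℕ):ℝ)))
      = ((r*s)^(m+2))⁻¹ *
        ∑ i ∈ Finset.range (k-1), ((2*Real.sin (((i:ℝ)+1)*π/(k:ℝ)))^(m+2))⁻¹ := by
    rw [Finset.mul_sum]
    rw [show Finset.Icc 2 k = Finset.Ico 2 (k+1) from (Finset.Ico_add_one_right_eq_Icc 2 k).symm]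
    rw [Finset.sum_Ico_eq_sum_range]
    rw [show k+1-2 = k-1 from by omega]
    refine Finset.sum_congr rfl fun i hi => ?_
    have hik : i < k - 1 := Finset.mem_range.mp hi
    have hargeq : ((2+i:ℕ):ℝ)-1 = (i:ℝ)+1 := by push_cast; ring
    rw [hargeq]
    have hub : (i:ℝ)+1 < (k:ℝ) := by
      have : i+1 < k := by omega
      exact_mod_cast this
    have hα1 : 0 < ((i:ℝ)+1)*π/(k:ℝ) := by positivity
    have hα2 : ((i:ℝ)+1)*π/(k:ℝ) < π := by
      rw [div_lt_iff₀ hkpos]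
      nlinarith [Real.pi_pos]
    have hsin : 0 < Real.sin (((i:ℝ)+1)*π/(k:ℝ)) := Real.sin_pos_of_pos_of_lt_pi hα1 hα2
    rw [hrpow _ (by positivity)]
    rw [show 2*r*s*Real.sin (((i:ℝ)+1)*π/(k:ℝ))
        = (r*s)*(2*Real.sin (((i:ℝ)+1)*π/(k:ℝ))) from by ring]
    rw [mul_pow, mul_inv]
  have htsum : (∑' i : ℕ, ((i:ℝ)+1) ^ (-((m+2:ℕ):ℝ)))
      = ∑' i : ℕ, (((i:ℝ)+1)^(m+2))⁻¹ :=
    tsum_congr fun i => hrpow _ (by positivity)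
  rw [hsum, htsum, hrpow', hrpow']
  have hdiv : ((k:ℝ)/(r*s))^(m+2) = (k:ℝ)^(m+2) * ((r*s)^(m+2))⁻¹ := by
    rw [div_pow, div_eq_mul_inv]
  rw [hdiv]
  have hfactor : ((r*s)^(m+2))⁻¹ *
        (∑ i ∈ Finset.range (k-1), ((2*Real.sin (((i:ℝ)+1)*π/(k:ℝ)))^(m+2))⁻¹)
      - (2/(2*π)^(m+2) * ∑' i : ℕ, (((i:ℝ)+1)^(m+2))⁻¹) * ((k:ℝ)^(m+2) * ((r*s)^(m+2))⁻¹)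
      = ((r*s)^(m+2))⁻¹ *
        ((∑ i ∈ Finset.range (k-1), ((2*Real.sin (((i:ℝ)+1)*π/(k:ℝ)))^(m+2))⁻¹)
          - 2/(2*π)^(m+2) * (∑' i : ℕ, (((i:ℝ)+1)^(m+2))⁻¹) * (k:ℝ)^(m+2)) := by
    ring
  rw [hfactor, abs_mul]
  have hA : |((r*s)^(m+2))⁻¹| = ((r*s)^(m+2))⁻¹ := abs_of_pos (by positivity)
  rw [hA]
  have hcore := core m (K-1) k hm hkk
  have hrhs : 23 * ((k:ℝ)^(m+2) * ((r*s)^(m+2))⁻¹) / (k:ℝ)^2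
      = ((r*s)^(m+2))⁻¹ * (23 * (k:ℝ)^m) := by
    rw [pow_add]
    field_simp
  rw [hrhs]
  exact mul_le_mul_of_nonneg_left hcore (by positivity)
end

section
/- Let N ≥ 5, m satisfy: m ∈ [2, N−2) if N = 5 or 6, and m ∈ ((N−2)/2, N−2) if N ≥ 7. Then 6 + (N−3)/(N−1) < 3(N−2)/(N−2−m) + 2(N−2−m)/(N−2). -/
theorem stmt_10 (N : ℕ) (hN : 5 ≤ N) (m : ℝ)
    (hm56 : N = 5 ∨ N = 6 → 2 ≤ m ∧ m < (N : ℝ) - 2)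
    (hm7 : 7 ≤ N → ((N : ℝ) - 2) / 2 < m ∧ m < (N : ℝ) - 2) :
    6 + ((N : ℝ) - 3) / ((N : ℝ) - 1) <
      3 * ((N : ℝ) - 2) / ((N : ℝ) - 2 - m) + 2 * ((N : ℝ) - 2 - m) / ((N : ℝ) - 2) := by
  have hN5 : (5:ℝ) ≤ (N:ℝ) := by exact_mod_cast hN
  have hc0 : (0:ℝ) < (N:ℝ) - 2 := by linarith
  have hkey : 0 < (N:ℝ) - 2 - m ∧ 2 * ((N:ℝ) - 2 - m) ≤ (N:ℝ) - 2 := by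
    rcases le_or_gt 7 N with h7 | h7
    · obtain ⟨h1, h2⟩ := hm7 h7
      constructor <;> linarith
    · have hN6 : (N:ℝ) ≤ 6 := by exact_mod_cast Nat.lt_succ_iff.mp h7
      obtain ⟨h1, h2⟩ := hm56 (by omega)
      constructor <;> linarith
  obtain ⟨ht0, ht2⟩ := hkey
  have h7le : (7:ℝ) ≤ 3 * ((N : ℝ) - 2) / ((N : ℝ) - 2 - m) + 2 * ((N : ℝ) - 2 - m) / ((N : ℝ) - 2) := by
    rw [div_add_div _ _ (ne_of_gt ht0) (ne_of_gt hc0), le_div_iff₀ (by positivity)]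
    nlinarith [mul_nonneg (by linarith : (0:ℝ) ≤ (N:ℝ) - 2 - 2*((N:ℝ)-2-m)) (by linarith : (0:ℝ) ≤ 3*((N:ℝ)-2) - ((N:ℝ)-2-m))]
  have hlhs : 6 + ((N : ℝ) - 3) / ((N : ℝ) - 1) < 7 := by
    have : ((N : ℝ) - 3) / ((N : ℝ) - 1) < 1 := by
      rw [div_lt_one (by linarith)]; linarith
    linarith
  linarith
end
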